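/- Under assumptions (A1)-(A3), the iterates generated by the asynchronous proximal ADMM converge in the following sense: for every node k, lim_{t→∞} ‖z_k^{t+1} − z_k^t‖ = 0; for every node k and every j ∈ N_k, lim_{t→∞} ‖x_{kj}^{t+1} − x_{kj}^t‖ = 0 and lim_{t→∞} ‖y_{kj}^{t+1} − y_{kj}^t‖ = 0; moreover lim_{t→∞} ‖x_{kj}^t − z_j^t‖ = 0 for every k and every j ∈ N_k. -/

import Mathlib

open Filter Topology RealInnerProductSpace

noncomputable section

/-- Zero-padded restriction of a vector of nodal variables to a neighborhood:
coordinates outside the neighborhood are set to zero. -/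
def restr {K : ℕ} (Nk : Finset (Fin K)) (v : Fin K → ℝ) : EuclideanSpace ℝ (Fin K) :=
  WithLp.toLp 2 (fun j => if j ∈ Nk then v j else 0)

/-- The setting of the asynchronous proximal ADMM: network data, assumptions
(A1)-(A2), and the algorithmic update equations (i)-(iii) together with the
delay bounds and the update-frequency condition. -/
structure ProxADMM (K : ℕ) where
  /-- neighborhoods, `j ∈ Nb k` means `j ∈ N_k` -/
  Nb : Fin K → Finset (Fin K)
  self_mem : ∀ k, k ∈ Nb k
  symm : ∀ k j, j ∈ Nb k ↔ k ∈ Nb j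
  /-- local cost of node `k`, as a function of the zero-padded neighborhood variables -/
  g : Fin K → EuclideanSpace ℝ (Fin K) → ℝ
  g_local : ∀ k v w, (∀ j ∈ Nb k, v j = w j) → g k v = g k w
  /-- the Lipschitz constants of (A1) -/
  L : Fin K → ℝ
  L_pos : ∀ k, 0 < L k
  g_diff : ∀ k, Differentiable ℝ (g k)
  /-- (A1): the gradient of `g k` is `L k`-Lipschitz -/
  g_grad_lip : ∀ k v w, ‖gradient (g k) v - gradient (g k) w‖ ≤ L k * ‖v - w‖
  /-- the convex nonsmooth part -/
  h : Fin K → ℝ → ℝ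
  h_convex : ∀ k, ConvexOn ℝ Set.univ (h k)
  /-- the constraint sets -/
  Xs : Fin K → Set ℝ
  Xs_nonempty : ∀ k, (Xs k).Nonempty
  Xs_compact : ∀ k, IsCompact (Xs k)
  Xs_convex : ∀ k, Convex ℝ (Xs k)
  /-- (A2): `g k` is bounded below over the constraint set -/
  g_bddBelow : ∀ k, ∃ b, ∀ v : Fin K → ℝ, (∀ j, v j ∈ Xs j) → b ≤ g k (restr (Nb k) v)
  /-- penalty parameters -/
  ρ : Fin K → ℝ
  ρ_pos : ∀ k, 0 < ρ k
  /-- update frequencies `f_k` -/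
  freq : Fin K → ℝ
  freq_pos : ∀ k, 0 < freq k
  freq_le_one : ∀ k, freq k ≤ 1
  /-- maximum delays `T_k` -/
  Td : Fin K → ℕ
  /-- updating sets `S^t` -/
  Sset : ℕ → Finset (Fin K)
  /-- delayed index: `τ t k = [t+1]_k` -/
  τ : ℕ → Fin K → ℕ
  τ_le : ∀ t k, τ t k ≤ t + 1
  τ_ge : ∀ t k, t + 1 ≤ τ t k + Td k
  /-- iterates -/
  x : ℕ → Fin K → Fin K → ℝ
  z : ℕ → Fin K → ℝ
  y : ℕ → Fin K → Fin K → ℝ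
  z_init_mem : ∀ j, z 0 j ∈ Xs j
  /-- (i): feasibility of the `z`-update -/
  z_update_mem : ∀ t j, j ∈ Sset t → z (t + 1) j ∈ Xs j
  /-- (i): for `j ∈ S^t`, `z_j^{t+1}` minimizes the `j`-th block over `X_j` -/
  z_update_min : ∀ t j, j ∈ Sset t → IsMinOn
      (fun w => h j w + ∑ k ∈ Nb j, (y t k j * (x t k j - w) + ρ k / 2 * (x t k j - w) ^ 2))
      (Xs j) (z (t + 1) j)
  /-- (i): non-updating nodes keep their old value -/
  z_noupdate : ∀ t j, j ∉ Sset t → z (t + 1) j = z t j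
  /-- (ii): proximal (linearized) `x`-update with delayed gradient -/
  x_update : ∀ t k, ∀ j ∈ Nb k,
      x (t + 1) k j = z (t + 1) j
        - (1 / ρ k) * (gradient (g k) (restr (Nb k) (z (τ t k))) j + y t k j)
  /-- (iii): dual update -/
  y_update : ∀ t k, ∀ j ∈ Nb k,
      y (t + 1) k j = y t k j + ρ k * (x (t + 1) k j - z (t + 1) j)
  /-- in any window of `T` consecutive iterations node `k` updates at least `f_k T` times -/
  update_freq : ∀ k (t₀ T : ℕ),
      freq k * T ≤ ((Finset.Ico t₀ (t₀ + T)).filter (fun t => k ∈ Sset t)).card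

/-- The augmented Lagrangian. -/
def ProxADMM.Lag {K : ℕ} (P : ProxADMM K) (xx : Fin K → Fin K → ℝ) (zz : Fin K → ℝ)
    (yy : Fin K → Fin K → ℝ) : ℝ :=
  ∑ k, (P.g k (restr (P.Nb k) (xx k)) + P.h k (zz k)
    + ∑ j ∈ P.Nb k, (yy k j * (xx k j - zz j) + P.ρ k / 2 * (xx k j - zz j) ^ 2))

end

noncomputable section
namespace AP


variable {K : ℕ}

lemma norm_sq_eq (v : EuclideanSpace ℝ (Fin K)) : ‖v‖ ^ 2 = ∑ j, (v j) ^ 2 := by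
  rw [EuclideanSpace.norm_eq, Real.sq_sqrt (by positivity)]
  simp [sq_abs]

lemma restr_apply (N : Finset (Fin K)) (v : Fin K → ℝ) (j : Fin K) :
    restr N v j = if j ∈ N then v j else 0 := rfl

lemma restr_sub (N : Finset (Fin K)) (v w : Fin K → ℝ) :
    restr N v - restr N w = restr N (fun j => v j - w j) := by
  ext j
  simp only [PiLp.sub_apply, restr_apply]
  split <;> simp

lemma norm_sq_restr (N : Finset (Fin K)) (v : Fin K → ℝ) :
    ‖restr N v‖ ^ 2 = ∑ j ∈ N, (v j) ^ 2 := by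
  rw [norm_sq_eq]
  rw [← Finset.sum_subset (Finset.subset_univ N)]
  · exact Finset.sum_congr rfl fun j hj => by simp [restr_apply, hj]
  · intro j _ hj; simp [restr_apply, hj]

lemma norm_restr_le (N : Finset (Fin K)) (v : EuclideanSpace ℝ (Fin K)) :
    ‖restr N (fun j => v j)‖ ≤ ‖v‖ := by
  have h1 : ‖restr N (fun j => v j)‖ ^ 2 ≤ ‖v‖ ^ 2 := by
    rw [norm_sq_restr, norm_sq_eq]
    exact Finset.sum_le_sum_of_subset_of_nonneg (Finset.subset_univ N)
      (fun j _ _ => sq_nonneg _)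
  nlinarith [norm_nonneg (restr N (fun j => v j)), norm_nonneg v]

lemma inner_restr (N : Finset (Fin K)) (u : EuclideanSpace ℝ (Fin K)) (v : Fin K → ℝ) :
    ⟪u, restr N v⟫ = ∑ j ∈ N, u j * v j := by
  simp only [PiLp.inner_apply, RCLike.inner_apply, conj_trivial]
  rw [← Finset.sum_subset (Finset.subset_univ N)]
  · exact Finset.sum_congr rfl fun j hj => by simp [restr_apply, hj, mul_comm]
  · intro j _ hj; simp [restr_apply, hj]

lemma sum_mul_le_norm (N : Finset (Fin K)) (u : EuclideanSpace ℝ (Fin K)) (v : Fin K → ℝ) :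
    ∑ j ∈ N, u j * v j ≤ ‖u‖ * ‖restr N v‖ := by
  rw [← inner_restr]
  exact real_inner_le_norm _ _



lemma taylor_abs {E : Type*} [NormedAddCommGroup E] [InnerProductSpace ℝ E] [CompleteSpace E]
    (f : E → ℝ) (L : ℝ) (hL : 0 ≤ L) (hd : Differentiable ℝ f)
    (hl : ∀ v w, ‖gradient f v - gradient f w‖ ≤ L * ‖v - w‖) (v w : E) :
    |f w - f v - ⟪gradient f v, w - v⟫| ≤ L * ‖w - v‖ ^ 2 := by
  have hfd : fderiv ℝ f v = InnerProductSpace.toDual ℝ E (gradient f v) := by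
    simp [gradient]
  have key : ‖f w - f v - (fderiv ℝ f v) (w - v)‖ ≤ (L * ‖w - v‖) * ‖w - v‖ := by
    apply (convex_segment v w).norm_image_sub_le_of_norm_fderiv_le'
      (fun x _ => hd x) ?_ (left_mem_segment ℝ v w) (right_mem_segment ℝ v w)
    intro x hx
    have h1 : fderiv ℝ f x - fderiv ℝ f v
        = InnerProductSpace.toDual ℝ E (gradient f x - gradient f v) := by
      simp [gradient, map_sub]
    have h2 : ‖fderiv ℝ f x - fderiv ℝ f v‖ = ‖gradient f x - gradient f v‖ := by
      rw [h1, LinearIsometryEquiv.norm_map]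
    rw [h2]
    refine (hl x v).trans ?_
    apply mul_le_mul_of_nonneg_left ?_ hL
    obtain ⟨a, b, ha, hb, hab, rfl⟩ := hx
    have hx1 : a • v + b • w - v = b • (w - v) := by
      have : v = (a + b) • v := by rw [hab, one_smul]
      calc a • v + b • w - v = a • v + b • w - (a + b) • v := by rw [← this]
        _ = b • (w - v) := by rw [add_smul, smul_sub]; abel
    rw [hx1, norm_smul, Real.norm_eq_abs, abs_of_nonneg hb]
    nlinarith [norm_nonneg (w - v)]
  rw [hfd] at key
  rw [InnerProductSpace.toDual_apply_apply] at key
  calc |f w - f v - ⟪gradient f v, w - v⟫| = ‖f w - f v - ⟪gradient f v, w - v⟫‖ := by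
        rw [Real.norm_eq_abs]
    _ ≤ (L * ‖w - v‖) * ‖w - v‖ := key
    _ = L * ‖w - v‖ ^ 2 := by ring



lemma strong_min {h : ℝ → ℝ} (hh : ConvexOn ℝ Set.univ h) {X : Set ℝ} (hX : Convex ℝ X)
    {q : ℝ → ℝ} {σ : ℝ}
    (hq : ∀ u v lam : ℝ, 0 ≤ lam → lam ≤ 1 →
      q ((1 - lam) * u + lam * v)
        = (1 - lam) * q u + lam * q v - σ / 2 * lam * (1 - lam) * (v - u) ^ 2)
    {zs z₀ : ℝ} (hmin : IsMinOn (fun w => h w + q w) X zs) (hzs : zs ∈ X) (hz₀ : z₀ ∈ X) :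
    h zs + q zs + σ / 2 * (z₀ - zs) ^ 2 ≤ h z₀ + q z₀ := by
  have key : ∀ lam : ℝ, 0 < lam → lam ≤ 1 →
      h zs + q zs + σ / 2 * (1 - lam) * (z₀ - zs) ^ 2 ≤ h z₀ + q z₀ := by
    intro lam hl0 hl1
    have hwX : (1 - lam) * zs + lam * z₀ ∈ X := by
      simpa [smul_eq_mul] using hX hzs hz₀ (by linarith) hl0.le (by ring)
    have hmin' : h zs + q zs ≤ h ((1 - lam) * zs + lam * z₀) + q ((1 - lam) * zs + lam * z₀) :=
      hmin hwX
    have hcv : h ((1 - lam) * zs + lam * z₀) ≤ (1 - lam) * h zs + lam * h z₀ := by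
      simpa [smul_eq_mul] using hh.2 (Set.mem_univ zs) (Set.mem_univ z₀)
        (by linarith : (0:ℝ) ≤ 1 - lam) hl0.le (by ring)
    have hqw := hq zs z₀ lam hl0.le hl1
    have h2 : lam * (h zs + q zs + σ / 2 * (1 - lam) * (z₀ - zs) ^ 2)
        ≤ lam * (h z₀ + q z₀) := by nlinarith
    exact le_of_mul_le_mul_left h2 hl0
  have hlim : Filter.Tendsto
      (fun n : ℕ => h zs + q zs + σ / 2 * (1 - 1 / ((n : ℝ) + 2)) * (z₀ - zs) ^ 2)
      atTop (𝓝 (h zs + q zs + σ / 2 * (1 - 0) * (z₀ - zs) ^ 2)) := by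
    have h0 : Filter.Tendsto (fun n : ℕ => 1 / ((n : ℝ) + 2)) atTop (𝓝 0) := by
      have := tendsto_one_div_add_atTop_nhds_zero_nat (𝕜 := ℝ)
      have h2 : Filter.Tendsto (fun n : ℕ => n + 1) atTop atTop := tendsto_add_atTop_nat 1
      have := this.comp h2
      convert this using 2 with n
      simp [Function.comp]; push_cast; ring
    exact tendsto_const_nhds.add
      (((tendsto_const_nhds.sub h0).const_mul _).mul tendsto_const_nhds)
  have := le_of_tendsto hlim (Filter.Eventually.of_forall (fun n : ℕ => key (1 / ((n : ℝ) + 2))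
    (by positivity) (by rw [div_le_one (by positivity)]; linarith [Nat.cast_nonneg (α := ℝ) n])))
  linarith [this]



lemma window_eq (a : ℕ → ℝ) {w t : ℕ} (hwt : w ≤ t) :
    ∑ s ∈ Finset.Ico (t + 1 - w) (t + 1), a s = ∑ u ∈ Finset.range w, a (t - u) := by
  apply Finset.sum_nbij' (fun s => t - s) (fun u => t - u)
  · intro s hs; simp only [Finset.mem_Ico] at hs; simp only [Finset.mem_range]; omega
  · intro u hu; simp only [Finset.mem_range] at hu; simp only [Finset.mem_Ico]; omega
  · intro s hs; simp only [Finset.mem_Ico] at hs; omega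
  · intro u hu; simp only [Finset.mem_range] at hu; omega
  · intro s hs; simp only [Finset.mem_Ico] at hs; congr 1; omega

lemma shift_sum_le (a : ℕ → ℝ) (ha : ∀ s, 0 ≤ a s) {u m N : ℕ} (hum : u ≤ m) :
    ∑ t ∈ Finset.Ico m N, a (t - u) ≤ ∑ s ∈ Finset.Ico 0 N, a s := by
  rw [show ∑ t ∈ Finset.Ico m N, a (t - u) = ∑ s ∈ (Finset.Ico m N).image (· - u), a s by
    rw [Finset.sum_image]; intro t1 h1 t2 h2 he
    simp only [Finset.mem_coe, Finset.mem_Ico] at h1 h2 he; omega]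
  apply Finset.sum_le_sum_of_subset_of_nonneg
  · intro s hs
    simp only [Finset.mem_image, Finset.mem_Ico] at hs ⊢
    obtain ⟨t, ht, rfl⟩ := hs; omega
  · intro s _ _; exact ha s

lemma sumwin (a : ℕ → ℝ) (ha : ∀ s, 0 ≤ a s) (w m N : ℕ) (hm : w ≤ m) :
    ∑ t ∈ Finset.Ico m N, ∑ s ∈ Finset.Ico (t + 1 - w) (t + 1), a s
      ≤ (w : ℝ) * ∑ s ∈ Finset.Ico 0 N, a s := by
  have h1 : ∀ t ∈ Finset.Ico m N, ∑ s ∈ Finset.Ico (t + 1 - w) (t + 1), a s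
      = ∑ u ∈ Finset.range w, a (t - u) := by
    intro t ht; simp only [Finset.mem_Ico] at ht
    exact window_eq a (le_trans hm ht.1)
  rw [Finset.sum_congr rfl h1, Finset.sum_comm]
  calc ∑ u ∈ Finset.range w, ∑ t ∈ Finset.Ico m N, a (t - u)
      ≤ ∑ _u ∈ Finset.range w, ∑ s ∈ Finset.Ico 0 N, a s := by
        apply Finset.sum_le_sum; intro u hu
        exact shift_sum_le a ha (le_trans (Finset.mem_range.mp hu).le hm)
    _ = (w : ℝ) * ∑ s ∈ Finset.Ico 0 N, a s := by
        rw [Finset.sum_const, Finset.card_range, nsmul_eq_mul]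

lemma norm_diff_sq_le {E : Type*} [NormedAddCommGroup E] (F : ℕ → E) {a b l u : ℕ}
    (hla : l ≤ a) (hlb : l ≤ b) (hau : a ≤ u) (hbu : b ≤ u) :
    ‖F a - F b‖ ^ 2 ≤ ((u - l : ℕ) : ℝ) * ∑ s ∈ Finset.Ico l u, ‖F (s + 1) - F s‖ ^ 2 := by
  have key : ∀ b' a' : ℕ, l ≤ b' → b' ≤ a' → a' ≤ u →
      ‖F a' - F b'‖ ^ 2 ≤ ((u - l : ℕ) : ℝ) * ∑ s ∈ Finset.Ico l u, ‖F (s + 1) - F s‖ ^ 2 := by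
    intro b' a' hlb' hba hau'
    have htel : F a' - F b' = ∑ s ∈ Finset.Ico b' a', (F (s + 1) - F s) := by
      rw [Finset.sum_Ico_eq_sub _ hba, Finset.sum_range_sub, Finset.sum_range_sub]
      abel
    have h1 : ‖F a' - F b'‖ ≤ ∑ s ∈ Finset.Ico b' a', ‖F (s + 1) - F s‖ := by
      rw [htel]; exact norm_sum_le _ _
    have h2 : ‖F a' - F b'‖ ^ 2 ≤ (∑ s ∈ Finset.Ico b' a', ‖F (s + 1) - F s‖) ^ 2 :=
      pow_le_pow_left₀ (norm_nonneg _) h1 2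
    have h3 : (∑ s ∈ Finset.Ico b' a', ‖F (s + 1) - F s‖) ^ 2
        ≤ ((Finset.Ico b' a').card : ℝ) * ∑ s ∈ Finset.Ico b' a', ‖F (s + 1) - F s‖ ^ 2 :=
      sq_sum_le_card_mul_sum_sq
    have h4 : ((Finset.Ico b' a').card : ℝ) ≤ ((u - l : ℕ) : ℝ) := by
      rw [Nat.card_Ico]; exact Nat.cast_le.mpr (by omega)
    have h5 : ∑ s ∈ Finset.Ico b' a', ‖F (s + 1) - F s‖ ^ 2
        ≤ ∑ s ∈ Finset.Ico l u, ‖F (s + 1) - F s‖ ^ 2 :=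
      Finset.sum_le_sum_of_subset_of_nonneg (Finset.Ico_subset_Ico hlb' hau')
        (fun s _ _ => sq_nonneg _)
    calc ‖F a' - F b'‖ ^ 2 ≤ ((Finset.Ico b' a').card : ℝ)
          * ∑ s ∈ Finset.Ico b' a', ‖F (s + 1) - F s‖ ^ 2 := le_trans h2 h3
      _ ≤ ((u - l : ℕ) : ℝ) * ∑ s ∈ Finset.Ico l u, ‖F (s + 1) - F s‖ ^ 2 := by
          apply mul_le_mul h4 h5 (Finset.sum_nonneg fun s _ => sq_nonneg _) (Nat.cast_nonneg _)
  rcases le_total b a with hba | hab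
  · exact key b a hlb hba hau
  · rw [norm_sub_rev]; exact key a b hla hab hbu

end AP
end


noncomputable section
namespace AP
open ProxADMM
variable {K : ℕ} (P : ProxADMM K)

/-- zero-padded neighborhood variables at time `t`, node `k` -/
def Zv (k : Fin K) (t : ℕ) : EuclideanSpace ℝ (Fin K) := restr (P.Nb k) (P.z t)

/-- delayed gradients -/
def Gv (k : Fin K) (s : ℕ) : EuclideanSpace ℝ (Fin K) := gradient (P.g k) (Zv P k s)

/-- squared successive difference of the neighborhood variables -/
def dsq (k : Fin K) (s : ℕ) : ℝ := ‖Zv P k (s + 1) - Zv P k s‖ ^ 2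

/-- primal residual vector -/
def rv (k : Fin K) (t : ℕ) : EuclideanSpace ℝ (Fin K) :=
  restr (P.Nb k) (fun j => P.x t k j - P.z t j)

def rsq (k : Fin K) (t : ℕ) : ℝ := ‖rv P k t‖ ^ 2

lemma dsq_nonneg (k : Fin K) (s : ℕ) : 0 ≤ dsq P k s := sq_nonneg _

lemma dsq_eq (k : Fin K) (s : ℕ) :
    dsq P k s = ∑ j ∈ P.Nb k, (P.z (s + 1) j - P.z s j) ^ 2 := by
  rw [dsq, Zv, Zv, restr_sub, norm_sq_restr]

lemma rsq_eq (k : Fin K) (t : ℕ) :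
    rsq P k t = ∑ j ∈ P.Nb k, (P.x t k j - P.z t j) ^ 2 := by
  rw [rsq, rv, norm_sq_restr]

lemma z_mem (t : ℕ) (j : Fin K) : P.z t j ∈ P.Xs j := by
  induction t with
  | zero => exact P.z_init_mem j
  | succ t ih =>
    by_cases hj : j ∈ P.Sset t
    · exact P.z_update_mem t j hj
    · rw [P.z_noupdate t j hj]; exact ih

lemma y_formula (t : ℕ) (k : Fin K) (j : Fin K) (hj : j ∈ P.Nb k) :
    P.y (t + 1) k j = -(Gv P k (P.τ t k)) j := by
  have hx := P.x_update t k j hj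
  have hy := P.y_update t k j hj
  have hρ : P.ρ k ≠ 0 := (P.ρ_pos k).ne'
  rw [hx] at hy
  rw [hy, Gv, Zv]
  field_simp
  ring

lemma r_coord (t : ℕ) (k : Fin K) (j : Fin K) (hj : j ∈ P.Nb k) :
    P.x (t + 2) k j - P.z (t + 2) j
      = -(1 / P.ρ k) * (Gv P k (P.τ (t + 1) k) j - Gv P k (P.τ t k) j) := by
  have hx := P.x_update (t + 1) k j hj
  have hyf := y_formula P t k j hj
  have h2 : t + 1 + 1 = t + 2 := rfl
  rw [h2] at hx
  rw [hx, hyf]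
  simp only [Gv, Zv]
  ring

lemma rv_eq (t : ℕ) (k : Fin K) :
    rv P k (t + 2) = (-(1 / P.ρ k)) •
      restr (P.Nb k) (fun j => Gv P k (P.τ (t + 1) k) j - Gv P k (P.τ t k) j) := by
  ext j
  simp only [rv, PiLp.smul_apply, restr_apply, smul_eq_mul]
  by_cases hj : j ∈ P.Nb k
  · simp only [hj, if_true]; exact r_coord P t k j hj
  · simp [hj]

lemma grad_lip_z (k : Fin K) (a b : ℕ) :
    ‖Gv P k a - Gv P k b‖ ≤ P.L k * ‖Zv P k a - Zv P k b‖ :=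
  P.g_grad_lip k _ _

lemma rv_norm_le (t : ℕ) (k : Fin K) :
    ‖rv P k (t + 2)‖ ≤ P.L k / P.ρ k * ‖Zv P k (P.τ (t + 1) k) - Zv P k (P.τ t k)‖ := by
  rw [rv_eq]
  rw [norm_smul, Real.norm_eq_abs]
  have hρ : 0 < P.ρ k := P.ρ_pos k
  have h1 : |(-(1 / P.ρ k))| = 1 / P.ρ k := by
    rw [abs_neg, abs_of_pos (by positivity)]
  rw [h1]
  have h2 : ‖restr (P.Nb k) (fun j => Gv P k (P.τ (t + 1) k) j - Gv P k (P.τ t k) j)‖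
      ≤ ‖Gv P k (P.τ (t + 1) k) - Gv P k (P.τ t k)‖ := by
    have := norm_restr_le (P.Nb k) (Gv P k (P.τ (t + 1) k) - Gv P k (P.τ t k))
    simpa [PiLp.sub_apply] using this
  calc 1 / P.ρ k * ‖restr (P.Nb k) fun j => Gv P k (P.τ (t + 1) k) j - Gv P k (P.τ t k) j‖
      ≤ 1 / P.ρ k * (P.L k * ‖Zv P k (P.τ (t + 1) k) - Zv P k (P.τ t k)‖) := by
        apply mul_le_mul_of_nonneg_left _ (by positivity)
        exact le_trans h2 (grad_lip_z P k _ _)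
    _ = P.L k / P.ρ k * ‖Zv P k (P.τ (t + 1) k) - Zv P k (P.τ t k)‖ := by ring

lemma Zdiff_sq_window (k : Fin K) {a b l u : ℕ} (hla : l ≤ a) (hau : a ≤ u)
    (hlb : l ≤ b) (hbu : b ≤ u) :
    ‖Zv P k a - Zv P k b‖ ^ 2 ≤ ((u - l : ℕ) : ℝ) * ∑ s ∈ Finset.Ico l u, dsq P k s :=
  norm_diff_sq_le (Zv P k) hla hlb hau hbu

lemma rsq_window (t : ℕ) (k : Fin K) :
    rsq P k (t + 2) ≤ (P.L k / P.ρ k) ^ 2 * ((P.Td k : ℝ) + 1)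
      * ∑ s ∈ Finset.Ico (t + 2 - (P.Td k + 1)) (t + 2), dsq P k s := by
  have hρ : 0 < P.ρ k := P.ρ_pos k
  have hL : 0 < P.L k := P.L_pos k
  set T := P.Td k
  have ha1 := P.τ_le (t + 1) k
  have ha2 := P.τ_ge (t + 1) k
  have hb1 := P.τ_le t k
  have hb2 := P.τ_ge t k
  have hw : ‖Zv P k (P.τ (t + 1) k) - Zv P k (P.τ t k)‖ ^ 2
      ≤ ((T : ℝ) + 1) * ∑ s ∈ Finset.Ico (t + 2 - (T + 1)) (t + 2), dsq P k s := by
    have := Zdiff_sq_window P k (a := P.τ (t + 1) k) (b := P.τ t k)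
      (l := t + 2 - (T + 1)) (u := t + 2) (by omega) (by omega) (by omega) (by omega)
    refine this.trans ?_
    apply mul_le_mul_of_nonneg_right _ (Finset.sum_nonneg fun s _ => dsq_nonneg P k s)
    have : ((t + 2 - (t + 2 - (T + 1)) : ℕ) : ℝ) ≤ (T : ℝ) + 1 := by
      have : (t + 2 - (t + 2 - (T + 1)) : ℕ) ≤ T + 1 := by omega
      exact_mod_cast this
    exact this
  have h1 : rsq P k (t + 2) ≤ (P.L k / P.ρ k) ^ 2
      * ‖Zv P k (P.τ (t + 1) k) - Zv P k (P.τ t k)‖ ^ 2 := by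
    rw [rsq]
    have := rv_norm_le P t k
    nlinarith [norm_nonneg (rv P k (t + 2)), norm_nonneg (Zv P k (P.τ (t + 1) k) - Zv P k (P.τ t k))]
  refine h1.trans ?_
  rw [mul_assoc]
  exact mul_le_mul_of_nonneg_left hw (by positivity)

lemma esq_window (t : ℕ) (k : Fin K) :
    ‖Gv P k (t + 1) - Gv P k (P.τ t k)‖ ^ 2 ≤ P.L k ^ 2 * (P.Td k : ℝ)
      * ∑ s ∈ Finset.Ico (t + 1 - P.Td k) (t + 1), dsq P k s := by
  have hL : 0 < P.L k := P.L_pos k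
  set T := P.Td k
  have hb1 := P.τ_le t k
  have hb2 := P.τ_ge t k
  have hw : ‖Zv P k (t + 1) - Zv P k (P.τ t k)‖ ^ 2
      ≤ (T : ℝ) * ∑ s ∈ Finset.Ico (t + 1 - T) (t + 1), dsq P k s := by
    have := Zdiff_sq_window P k (a := t + 1) (b := P.τ t k)
      (l := t + 1 - T) (u := t + 1) (by omega) (by omega) (by omega) (by omega)
    refine this.trans ?_
    apply mul_le_mul_of_nonneg_right _ (Finset.sum_nonneg fun s _ => dsq_nonneg P k s)
    have h : (t + 1 - (t + 1 - T) : ℕ) ≤ T := by omega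
    exact_mod_cast h
  have h1 : ‖Gv P k (t + 1) - Gv P k (P.τ t k)‖ ^ 2
      ≤ P.L k ^ 2 * ‖Zv P k (t + 1) - Zv P k (P.τ t k)‖ ^ 2 := by
    have := grad_lip_z P k (t + 1) (P.τ t k)
    nlinarith [norm_nonneg (Gv P k (t + 1) - Gv P k (P.τ t k)),
      norm_nonneg (Zv P k (t + 1) - Zv P k (P.τ t k))]
  refine h1.trans ?_
  rw [mul_assoc]
  exact mul_le_mul_of_nonneg_left hw (by positivity)

end AP
end

noncomputable section
namespace AP
variable {K : ℕ} (P : ProxADMM K)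

lemma swap_sum (f : Fin K → Fin K → ℝ) :
    ∑ k, ∑ j ∈ P.Nb k, f k j = ∑ j, ∑ k ∈ P.Nb j, f k j := by
  have h1 : ∀ k, ∑ j ∈ P.Nb k, f k j = ∑ j, if j ∈ P.Nb k then f k j else 0 := by
    intro k
    rw [Finset.sum_ite_mem, Finset.univ_inter]
  have h2 : ∀ j, ∑ k ∈ P.Nb j, f k j = ∑ k, if k ∈ P.Nb j then f k j else 0 := by
    intro j
    rw [Finset.sum_ite_mem, Finset.univ_inter]
  simp only [h1, h2]
  rw [Finset.sum_comm]
  apply Finset.sum_congr rfl; intro j _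
  apply Finset.sum_congr rfl; intro k _
  congr 1
  simp only [eq_iff_iff]
  exact P.symm k j

lemma Lag_decomp (xx : Fin K → Fin K → ℝ) (zz : Fin K → ℝ) (yy : Fin K → Fin K → ℝ) :
    P.Lag xx zz yy = (∑ k, P.g k (restr (P.Nb k) (xx k)))
      + ∑ j, (P.h j (zz j) + ∑ k ∈ P.Nb j,
          (yy k j * (xx k j - zz j) + P.ρ k / 2 * (xx k j - zz j) ^ 2)) := by
  rw [ProxADMM.Lag]
  rw [Finset.sum_add_distrib, Finset.sum_add_distrib, Finset.sum_add_distrib]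
  rw [swap_sum]
  ring

lemma ystep (t : ℕ) :
    P.Lag (P.x (t + 1)) (P.z (t + 1)) (P.y (t + 1))
      = P.Lag (P.x (t + 1)) (P.z (t + 1)) (P.y t) + ∑ k, P.ρ k * rsq P k (t + 1) := by
  rw [ProxADMM.Lag, ProxADMM.Lag, ← Finset.sum_add_distrib]
  apply Finset.sum_congr rfl; intro k _
  rw [rsq_eq, Finset.mul_sum]
  have hs : ∑ j ∈ P.Nb k, (P.y (t + 1) k j * (P.x (t + 1) k j - P.z (t + 1) j)
        + P.ρ k / 2 * (P.x (t + 1) k j - P.z (t + 1) j) ^ 2)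
      = ∑ j ∈ P.Nb k, ((P.y t k j * (P.x (t + 1) k j - P.z (t + 1) j)
        + P.ρ k / 2 * (P.x (t + 1) k j - P.z (t + 1) j) ^ 2)
        + P.ρ k * (P.x (t + 1) k j - P.z (t + 1) j) ^ 2) := by
    apply Finset.sum_congr rfl; intro j hj
    have hy := P.y_update t k j hj
    rw [hy]; ring
  rw [hs, Finset.sum_add_distrib]
  ring

lemma zstep (t : ℕ) :
    P.Lag (P.x t) (P.z (t + 1)) (P.y t)
      + ∑ j, ((∑ k ∈ P.Nb j, P.ρ k) / 2) * (P.z (t + 1) j - P.z t j) ^ 2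
      ≤ P.Lag (P.x t) (P.z t) (P.y t) := by
  rw [Lag_decomp, Lag_decomp]
  have key : ∀ j, P.h j (P.z (t + 1) j) + (∑ k ∈ P.Nb j,
        (P.y t k j * (P.x t k j - P.z (t + 1) j)
          + P.ρ k / 2 * (P.x t k j - P.z (t + 1) j) ^ 2))
      + ((∑ k ∈ P.Nb j, P.ρ k) / 2) * (P.z (t + 1) j - P.z t j) ^ 2
      ≤ P.h j (P.z t j) + ∑ k ∈ P.Nb j,
        (P.y t k j * (P.x t k j - P.z t j) + P.ρ k / 2 * (P.x t k j - P.z t j) ^ 2) := by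
    intro j
    by_cases hj : j ∈ P.Sset t
    · -- use the minimizing property and strong convexity
      have hmin := P.z_update_min t j hj
      have hsc := strong_min (h := P.h j) (P.h_convex j) (P.Xs_convex j)
        (q := fun w => ∑ k ∈ P.Nb j, (P.y t k j * (P.x t k j - w)
          + P.ρ k / 2 * (P.x t k j - w) ^ 2))
        (σ := ∑ k ∈ P.Nb j, P.ρ k) ?_ hmin (P.z_update_mem t j hj) (z_mem P t j)
      · calc _ ≤ P.h j (P.z t j) + ∑ k ∈ P.Nb j, (P.y t k j * (P.x t k j - P.z t j)
              + P.ρ k / 2 * (P.x t k j - P.z t j) ^ 2) := by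
              have h2 : ((P.z t j : ℝ) - P.z (t + 1) j) ^ 2
                  = (P.z (t + 1) j - P.z t j) ^ 2 := by ring
              rw [h2] at hsc
              linarith [hsc]
        _ = _ := by ring_nf
      · intro u v lam h0 h1
        rw [Finset.mul_sum]
        rw [show (∑ k ∈ P.Nb j, P.ρ k) / 2 * lam * (1 - lam) * (v - u) ^ 2
          = ∑ k ∈ P.Nb j, (P.ρ k / 2 * lam * (1 - lam) * (v - u) ^ 2) by
            rw [Finset.sum_div, Finset.sum_mul, Finset.sum_mul, Finset.sum_mul]]
        rw [Finset.mul_sum, ← Finset.sum_add_distrib, ← Finset.sum_sub_distrib]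
        apply Finset.sum_congr rfl; intro k _
        ring
    · have hz : P.z (t + 1) j = P.z t j := P.z_noupdate t j hj
      rw [hz]
      simp
  have hsum := Finset.sum_le_sum (fun j (_ : j ∈ Finset.univ) => key j)
  rw [Finset.sum_add_distrib] at hsum
  linarith [hsum]

end AP
end

noncomputable section
namespace AP
variable {K : ℕ} (P : ProxADMM K)

lemma young (x y c : ℝ) (hc : 0 < c) : x * y ≤ 1 / (2 * c) * x ^ 2 + c / 2 * y ^ 2 := by
  have h2c : (0:ℝ) < 2 * c := by linarith
  calc x * y = 2 * c * (x * y) / (2 * c) := by field_simp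
    _ ≤ (x ^ 2 + c ^ 2 * y ^ 2) / (2 * c) := by
        apply (div_le_div_iff_of_pos_right h2c).mpr
        nlinarith [sq_nonneg (x - c * y)]
    _ = 1 / (2 * c) * x ^ 2 + c / 2 * y ^ 2 := by field_simp

lemma xstep_core (t : ℕ) (k : Fin K) (hβ : 0 < P.ρ k - 7 * P.L k) :
    P.g k (restr (P.Nb k) (P.x (t + 1) k))
      + ∑ j ∈ P.Nb k, (P.y t k j * (P.x (t + 1) k j - P.z (t + 1) j)
          + P.ρ k / 2 * (P.x (t + 1) k j - P.z (t + 1) j) ^ 2)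
    ≤ P.g k (restr (P.Nb k) (P.x t k))
      + ∑ j ∈ P.Nb k, (P.y t k j * (P.x t k j - P.z (t + 1) j)
          + P.ρ k / 2 * (P.x t k j - P.z (t + 1) j) ^ 2)
      + 1 / (2 * (P.ρ k - 4 * P.L k)) * ‖Gv P k (t + 1) - Gv P k (P.τ t k)‖ ^ 2
      + 3 * P.L k * rsq P k (t + 1) := by
  have hL : 0 < P.L k := P.L_pos k
  have hρ : 0 < P.ρ k := P.ρ_pos k
  have hc : 0 < P.ρ k - 4 * P.L k := by linarith
  set N := P.Nb k with hN
  set a : Fin K → ℝ := P.x (t + 1) k with ha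
  set b : Fin K → ℝ := P.x t k with hb
  set zp : Fin K → ℝ := P.z (t + 1) with hzp
  set Gz : EuclideanSpace ℝ (Fin K) := Gv P k (t + 1) with hGz
  set Gd : EuclideanSpace ℝ (Fin K) := Gv P k (P.τ t k) with hGd
  set Sa : ℝ := ∑ j ∈ N, (a j - zp j) ^ 2 with hSa
  set Sb : ℝ := ∑ j ∈ N, (b j - zp j) ^ 2 with hSb
  set Sab : ℝ := ∑ j ∈ N, (a j - b j) ^ 2 with hSab
  -- restr differences
  have hres : ∀ v : Fin K → ℝ, restr N v - Zv P k (t + 1)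
      = restr N (fun j => v j - zp j) := by
    intro v; rw [Zv, restr_sub]
  -- Taylor bounds
  have htay : ∀ v : Fin K → ℝ,
      |P.g k (restr N v) - P.g k (Zv P k (t + 1))
        - ∑ j ∈ N, Gz j * (v j - zp j)| ≤ P.L k * ∑ j ∈ N, (v j - zp j) ^ 2 := by
    intro v
    have := taylor_abs (P.g k) (P.L k) hL.le (P.g_diff k)
      (P.g_grad_lip k) (Zv P k (t + 1)) (restr N v)
    rw [hres v] at this
    rw [inner_restr, norm_sq_restr] at this
    exact this
  have hT1 := htay a
  have hT2 := htay b
  rw [abs_le] at hT1 hT2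
  -- quadratic minimization identity
  have hQ : ∑ j ∈ N, ((Gd j + P.y t k j) * (a j - zp j) + P.ρ k / 2 * (a j - zp j) ^ 2)
        + P.ρ k / 2 * Sab
      = ∑ j ∈ N, ((Gd j + P.y t k j) * (b j - zp j) + P.ρ k / 2 * (b j - zp j) ^ 2) := by
    rw [hSab, Finset.mul_sum, ← Finset.sum_add_distrib]
    apply Finset.sum_congr rfl; intro j hj
    have hxj := P.x_update t k j hj
    have hsub : Gd j + P.y t k j = P.ρ k * (zp j - a j) := by
      rw [hGd, Gv, Zv]
      rw [ha, hzp]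
      rw [hxj]
      field_simp
      ring
    linear_combination (a j - b j) * hsub
  -- Cauchy-Schwarz + Young
  have hCS : ∑ j ∈ N, (Gz j - Gd j) * (a j - b j)
      ≤ 1 / (2 * (P.ρ k - 4 * P.L k)) * ‖Gz - Gd‖ ^ 2 + (P.ρ k - 4 * P.L k) / 2 * Sab := by
    have h1 : ∑ j ∈ N, (Gz - Gd) j * (a j - b j)
        ≤ ‖Gz - Gd‖ * ‖restr N (fun j => a j - b j)‖ :=
      sum_mul_le_norm N (Gz - Gd) _
    have h2 : ∑ j ∈ N, (Gz j - Gd j) * (a j - b j)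
        = ∑ j ∈ N, (Gz - Gd) j * (a j - b j) := by
      apply Finset.sum_congr rfl; intro j _
      simp [PiLp.sub_apply]
    have h3 : ‖restr N (fun j => a j - b j)‖ ^ 2 = Sab := norm_sq_restr _ _
    rw [h2]
    refine h1.trans ?_
    have := young ‖Gz - Gd‖ ‖restr N (fun j => a j - b j)‖ (P.ρ k - 4 * P.L k) hc
    rw [h3] at this
    exact this
  have hSbb : Sb ≤ 2 * Sab + 2 * Sa := by
    rw [hSa, hSb, hSab, Finset.mul_sum, Finset.mul_sum, ← Finset.sum_add_distrib]
    apply Finset.sum_le_sum; intro j _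
    nlinarith [sq_nonneg (2 * a j - b j - zp j)]
  -- sum splitting identity
  have hI : (∑ j ∈ N, Gz j * (a j - zp j))
        + (∑ j ∈ N, (P.y t k j * (a j - zp j) + P.ρ k / 2 * (a j - zp j) ^ 2))
        + (∑ j ∈ N, ((Gd j + P.y t k j) * (b j - zp j) + P.ρ k / 2 * (b j - zp j) ^ 2))
      = (∑ j ∈ N, Gz j * (b j - zp j))
        + (∑ j ∈ N, (P.y t k j * (b j - zp j) + P.ρ k / 2 * (b j - zp j) ^ 2))
        + ((∑ j ∈ N, (Gz j - Gd j) * (a j - b j))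
          + (∑ j ∈ N, ((Gd j + P.y t k j) * (a j - zp j) + P.ρ k / 2 * (a j - zp j) ^ 2))) := by
    rw [← Finset.sum_add_distrib, ← Finset.sum_add_distrib, ← Finset.sum_add_distrib,
      ← Finset.sum_add_distrib, ← Finset.sum_add_distrib]
    apply Finset.sum_congr rfl; intro j _
    ring
  have hrsq : rsq P k (t + 1) = Sa := by rw [rsq_eq]
  have hLSb : P.L k * Sb ≤ P.L k * (2 * Sab + 2 * Sa) :=
    mul_le_mul_of_nonneg_left hSbb hL.le
  rw [hrsq]
  linarith [hT1.2, hT2.1, hQ, hCS, hI, hLSb, hSa, hSb, hSab]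

lemma xstep (t : ℕ) (hβ : ∀ k, 0 < P.ρ k - 7 * P.L k) :
    P.Lag (P.x (t + 1)) (P.z (t + 1)) (P.y t)
      ≤ P.Lag (P.x t) (P.z (t + 1)) (P.y t)
        + ∑ k, (1 / (2 * (P.ρ k - 4 * P.L k)) * ‖Gv P k (t + 1) - Gv P k (P.τ t k)‖ ^ 2
          + 3 * P.L k * rsq P k (t + 1)) := by
  rw [ProxADMM.Lag, ProxADMM.Lag, ← Finset.sum_add_distrib]
  apply Finset.sum_le_sum; intro k _
  have := xstep_core P t k (hβ k)
  linarith [this]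

end AP
end

noncomputable section
namespace AP
variable {K : ℕ} (P : ProxADMM K)

/-- the augmented Lagrangian along the iterates -/
def Lg (t : ℕ) : ℝ := P.Lag (P.x t) (P.z t) (P.y t)

lemma descent (hβ : ∀ k, 0 < P.ρ k - 7 * P.L k) (t : ℕ) :
    Lg P (t + 1) + (∑ j, ((∑ k ∈ P.Nb j, P.ρ k) / 2) * (P.z (t + 1) j - P.z t j) ^ 2)
      ≤ Lg P t + ∑ k, (1 / (2 * (P.ρ k - 4 * P.L k))
          * ‖Gv P k (t + 1) - Gv P k (P.τ t k)‖ ^ 2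
        + (3 * P.L k + P.ρ k) * rsq P k (t + 1)) := by
  have hy := ystep P t
  have hx := xstep P t hβ
  have hz := zstep P t
  have hcomb : ∑ k, (1 / (2 * (P.ρ k - 4 * P.L k))
          * ‖Gv P k (t + 1) - Gv P k (P.τ t k)‖ ^ 2 + 3 * P.L k * rsq P k (t + 1))
        + ∑ k, P.ρ k * rsq P k (t + 1)
      = ∑ k, (1 / (2 * (P.ρ k - 4 * P.L k))
          * ‖Gv P k (t + 1) - Gv P k (P.τ t k)‖ ^ 2
        + (3 * P.L k + P.ρ k) * rsq P k (t + 1)) := by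
    rw [← Finset.sum_add_distrib]
    apply Finset.sum_congr rfl; intro k _; ring
  rw [Lg, Lg]
  linarith [hy, hx, hz, hcomb]

/-- eventual per-iteration window bound -/
lemma descent_win (hβ : ∀ k, 0 < P.ρ k - 7 * P.L k) (t : ℕ) (ht : 1 ≤ t) :
    Lg P (t + 1) + (∑ j, ((∑ k ∈ P.Nb j, P.ρ k) / 2) * (P.z (t + 1) j - P.z t j) ^ 2)
      ≤ Lg P t + ∑ k,
        (1 / (2 * (P.ρ k - 4 * P.L k)) * (P.L k ^ 2 * (P.Td k : ℝ))
            * ∑ s ∈ Finset.Ico (t + 1 - P.Td k) (t + 1), dsq P k s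
          + (3 * P.L k + P.ρ k) * ((P.L k / P.ρ k) ^ 2 * ((P.Td k : ℝ) + 1))
            * ∑ s ∈ Finset.Ico (t + 1 - (P.Td k + 1)) (t + 1), dsq P k s) := by
  refine (descent P hβ t).trans ?_
  apply add_le_add (le_refl _)
  apply Finset.sum_le_sum; intro k _
  have hL : 0 < P.L k := P.L_pos k
  have hρ : 0 < P.ρ k := P.ρ_pos k
  have hc : 0 < P.ρ k - 4 * P.L k := by have := hβ k; linarith
  have he := esq_window P t k
  have hr := rsq_window P (t - 1) k
  rw [show t - 1 + 2 = t + 1 by omega] at hr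
  have h1 : 1 / (2 * (P.ρ k - 4 * P.L k)) * ‖Gv P k (t + 1) - Gv P k (P.τ t k)‖ ^ 2
      ≤ 1 / (2 * (P.ρ k - 4 * P.L k)) * (P.L k ^ 2 * (P.Td k : ℝ))
          * ∑ s ∈ Finset.Ico (t + 1 - P.Td k) (t + 1), dsq P k s := by
    rw [mul_assoc]
    exact mul_le_mul_of_nonneg_left he (by positivity)
  have h2 : (3 * P.L k + P.ρ k) * rsq P k (t + 1)
      ≤ (3 * P.L k + P.ρ k) * ((P.L k / P.ρ k) ^ 2 * ((P.Td k : ℝ) + 1))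
          * ∑ s ∈ Finset.Ico (t + 1 - (P.Td k + 1)) (t + 1), dsq P k s := by
    rw [mul_assoc]
    refine mul_le_mul_of_nonneg_left ?_ (by positivity)
    exact hr
  linarith [h1, h2]

lemma quad_lb (A C u : ℝ) (hA : 0 < A) : -(C ^ 2 / (4 * A)) ≤ A * u ^ 2 - C * u := by
  have key : (A * u ^ 2 - C * u + C ^ 2 / (4 * A)) * (4 * A) = (2 * A * u - C) ^ 2 := by
    field_simp; ring
  nlinarith [sq_nonneg (2 * A * u - C), key]

lemma zbound : ∃ R : ℝ, 0 ≤ R ∧ ∀ k a b, ‖Zv P k a - Zv P k b‖ ≤ 2 * R := by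
  have hXb : ∀ j : Fin K, ∃ M : ℝ, ∀ x ∈ P.Xs j, ‖x‖ ≤ M := by
    intro j
    exact (P.Xs_compact j).isBounded.exists_norm_le
  choose M hM using hXb
  set R : ℝ := Real.sqrt (∑ j, M j ^ 2) with hR
  have hRnn : 0 ≤ R := Real.sqrt_nonneg _
  refine ⟨R, hRnn, ?_⟩
  have hZ : ∀ (k : Fin K) (a : ℕ), ‖Zv P k a‖ ≤ R := by
    intro k a
    have h1 : ‖Zv P k a‖ ^ 2 ≤ ∑ j, M j ^ 2 := by
      rw [Zv, norm_sq_restr]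
      refine le_trans (Finset.sum_le_sum_of_subset_of_nonneg (Finset.subset_univ _)
        (fun j _ _ => sq_nonneg _)) ?_
      apply Finset.sum_le_sum; intro j _
      have := hM j (P.z a j) (z_mem P a j)
      rw [Real.norm_eq_abs] at this
      nlinarith [abs_nonneg (P.z a j), sq_abs (P.z a j)]
    have h2 : ‖Zv P k a‖ ^ 2 ≤ R ^ 2 := by
      rw [hR, Real.sq_sqrt]
      · exact h1
      · exact Finset.sum_nonneg fun j _ => sq_nonneg _
    nlinarith [norm_nonneg (Zv P k a)]
  intro k a b
  calc ‖Zv P k a - Zv P k b‖ ≤ ‖Zv P k a‖ + ‖Zv P k b‖ := norm_sub_le _ _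
    _ ≤ 2 * R := by linarith [hZ k a, hZ k b]

lemma hbound : ∀ k : Fin K, ∃ c : ℝ, ∀ w ∈ P.Xs k, c ≤ P.h k w := by
  intro k
  have hcont : ContinuousOn (P.h k) (P.Xs k) :=
    ((P.h_convex k).continuousOn isOpen_univ).mono (Set.subset_univ _)
  obtain ⟨w₀, hw₀, hmin⟩ := (P.Xs_compact k).exists_isMinOn (P.Xs_nonempty k) hcont
  exact ⟨P.h k w₀, fun w hw => hmin hw⟩

lemma lagLB (hβ : ∀ k, 0 < P.ρ k - 7 * P.L k) : ∃ B : ℝ, ∀ t, B ≤ Lg P (t + 1) := by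
  obtain ⟨R, hRnn, hR⟩ := zbound P
  choose bh hbh using hbound P
  choose bg hbg using P.g_bddBelow
  refine ⟨∑ k, (bg k + bh k - (P.L k * (2 * R)) ^ 2 / (4 * (P.ρ k / 2 - P.L k))), fun t => ?_⟩
  rw [Lg, ProxADMM.Lag]
  apply Finset.sum_le_sum
  intro k _
  have hL : 0 < P.L k := P.L_pos k
  have hρ : 0 < P.ρ k := P.ρ_pos k
  have hA : 0 < P.ρ k / 2 - P.L k := by have := hβ k; linarith
  set N := P.Nb k with hN
  set u : ℝ := ‖rv P k (t + 1)‖ with hu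
  -- Taylor lower bound for g at the z-point
  have htay0 := taylor_abs (P.g k) (P.L k) hL.le (P.g_diff k)
    (P.g_grad_lip k) (Zv P k (t + 1)) (restr N (P.x (t + 1) k))
  have hres : restr N (P.x (t + 1) k) - Zv P k (t + 1)
      = restr N (fun j => P.x (t + 1) k j - P.z (t + 1) j) := by
    rw [Zv, restr_sub]
  rw [hres, inner_restr, norm_sq_restr] at htay0
  have htay : |P.g k (restr N (P.x (t + 1) k)) - P.g k (Zv P k (t + 1))
      - ∑ j ∈ N, Gv P k (t + 1) j * (P.x (t + 1) k j - P.z (t + 1) j)|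
      ≤ P.L k * ∑ j ∈ N, (P.x (t + 1) k j - P.z (t + 1) j) ^ 2 := htay0
  rw [abs_le] at htay
  have hsq : ∑ j ∈ N, (P.x (t + 1) k j - P.z (t + 1) j) ^ 2 = u ^ 2 :=
    (rsq_eq P k (t + 1)).symm
  have hg0 : bg k ≤ P.g k (Zv P k (t + 1)) := hbg k _ (fun j => z_mem P (t + 1) j)
  have hh0 : bh k ≤ P.h k (P.z (t + 1) k) := hbh k _ (z_mem P (t + 1) k)
  -- the inner product with the dual variable
  have hip : -(P.L k * (2 * R)) * u ≤ ∑ j ∈ N, (Gv P k (t + 1) j + P.y (t + 1) k j)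
      * (P.x (t + 1) k j - P.z (t + 1) j) := by
    have h1 : ∑ j ∈ N, (Gv P k (t + 1) j + P.y (t + 1) k j)
        * (P.x (t + 1) k j - P.z (t + 1) j)
        = ∑ j ∈ N, (Gv P k (t + 1) - Gv P k (P.τ t k)) j
          * (P.x (t + 1) k j - P.z (t + 1) j) := by
      apply Finset.sum_congr rfl; intro j hj
      rw [y_formula P t k j hj]
      simp only [PiLp.sub_apply]
      ring
    have h2 : ∑ j ∈ N, (-(Gv P k (t + 1) - Gv P k (P.τ t k))) j
        * (P.x (t + 1) k j - P.z (t + 1) j)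
        ≤ ‖-(Gv P k (t + 1) - Gv P k (P.τ t k))‖
          * ‖restr N (fun j => P.x (t + 1) k j - P.z (t + 1) j)‖ :=
      sum_mul_le_norm N _ _
    rw [norm_neg] at h2
    have h3 : ‖Gv P k (t + 1) - Gv P k (P.τ t k)‖ ≤ P.L k * (2 * R) := by
      refine (grad_lip_z P k _ _).trans ?_
      exact mul_le_mul_of_nonneg_left (hR k _ _) hL.le
    have h4 : ‖restr N (fun j => P.x (t + 1) k j - P.z (t + 1) j)‖ = u := by
      rw [hu, rv]
    have h5 : ∑ j ∈ N, (-(Gv P k (t + 1) - Gv P k (P.τ t k))) j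
          * (P.x (t + 1) k j - P.z (t + 1) j)
        = -∑ j ∈ N, (Gv P k (t + 1) - Gv P k (P.τ t k)) j
          * (P.x (t + 1) k j - P.z (t + 1) j) := by
      rw [← Finset.sum_neg_distrib]
      apply Finset.sum_congr rfl; intro j _
      simp only [PiLp.neg_apply]
      ring
    rw [h5, h4] at h2
    have h6 : P.L k * (2 * R) * u ≥ ‖Gv P k (t + 1) - Gv P k (P.τ t k)‖ * u := by
      apply mul_le_mul_of_nonneg_right h3
      rw [hu]; exact norm_nonneg _
    rw [h1]
    have h7 : -∑ j ∈ N, (Gv P k (t + 1) - Gv P k (P.τ t k)) j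
          * (P.x (t + 1) k j - P.z (t + 1) j)
        ≤ ‖Gv P k (t + 1) - Gv P k (P.τ t k)‖ * u := h2
    linarith [h7, h6]
  -- splitting the sums
  have hsplit : ∑ j ∈ N, (P.y (t + 1) k j * (P.x (t + 1) k j - P.z (t + 1) j)
        + P.ρ k / 2 * (P.x (t + 1) k j - P.z (t + 1) j) ^ 2)
      = ∑ j ∈ N, P.y (t + 1) k j * (P.x (t + 1) k j - P.z (t + 1) j)
        + P.ρ k / 2 * u ^ 2 := by
    rw [Finset.sum_add_distrib, ← Finset.mul_sum, hsq]
  have hmerge : ∑ j ∈ N, Gv P k (t + 1) j * (P.x (t + 1) k j - P.z (t + 1) j)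
        + ∑ j ∈ N, P.y (t + 1) k j * (P.x (t + 1) k j - P.z (t + 1) j)
      = ∑ j ∈ N, (Gv P k (t + 1) j + P.y (t + 1) k j)
          * (P.x (t + 1) k j - P.z (t + 1) j) := by
    rw [← Finset.sum_add_distrib]
    apply Finset.sum_congr rfl; intro j _
    ring
  have hq := quad_lb (P.ρ k / 2 - P.L k) (P.L k * (2 * R)) u hA
  have ht1 := htay.1
  rw [hsq] at ht1
  linarith [hg0, hh0, hip, hq, hsplit, hmerge, ht1]

end AP
end

noncomputable section
namespace AP
variable {K : ℕ} (P : ProxADMM K)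

/-- per-node total error coefficient -/
def Acoef (k : Fin K) : ℝ :=
  1 / (2 * (P.ρ k - 4 * P.L k)) * (P.L k ^ 2 * (P.Td k : ℝ)) * (P.Td k : ℝ)
    + (3 * P.L k + P.ρ k) * ((P.L k / P.ρ k) ^ 2 * ((P.Td k : ℝ) + 1)) * ((P.Td k : ℝ) + 1)

lemma Acoef_le (k : Fin K) (hβ : 0 < P.ρ k - 7 * P.L k) :
    Acoef P k ≤ (7 * P.L k / (2 * P.ρ k ^ 2) + 1 / P.ρ k) * P.L k ^ 2
        * ((P.Td k : ℝ) + 1) ^ 2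
      + P.L k * (P.Td k : ℝ) ^ 2 / 2 := by
  have hL : 0 < P.L k := P.L_pos k
  have hρ : 0 < P.ρ k := P.ρ_pos k
  have hc : 0 < P.ρ k - 4 * P.L k := by linarith
  set T : ℝ := (P.Td k : ℝ) with hT
  have hTnn : 0 ≤ T := Nat.cast_nonneg _
  have h1 : 1 / (2 * (P.ρ k - 4 * P.L k)) * (P.L k ^ 2 * T) * T ≤ P.L k * T ^ 2 / 2 := by
    rw [div_mul_eq_mul_div, div_mul_eq_mul_div, div_le_div_iff₀ (by linarith) (by norm_num)]
    nlinarith [mul_nonneg (mul_nonneg hL.le (sq_nonneg T)) (by linarith : (0:ℝ) ≤ P.ρ k - 5 * P.L k)]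
  have h2 : (3 * P.L k + P.ρ k) * ((P.L k / P.ρ k) ^ 2 * (T + 1)) * (T + 1)
      ≤ (7 * P.L k / (2 * P.ρ k ^ 2) + 1 / P.ρ k) * P.L k ^ 2 * (T + 1) ^ 2 := by
    have he1 : (3 * P.L k + P.ρ k) * ((P.L k / P.ρ k) ^ 2 * (T + 1)) * (T + 1)
        = ((3 * P.L k + P.ρ k) / P.ρ k ^ 2) * P.L k ^ 2 * (T + 1) ^ 2 := by
      field_simp
    rw [he1]
    apply mul_le_mul_of_nonneg_right _ (sq_nonneg _)
    apply mul_le_mul_of_nonneg_right _ (sq_nonneg _)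
    rw [div_add_div _ _ (by positivity : (2:ℝ) * P.ρ k ^ 2 ≠ 0) (by positivity : P.ρ k ≠ 0)]
    rw [div_le_div_iff₀ (by positivity) (by positivity)]
    nlinarith [sq_nonneg (P.ρ k), mul_pos hρ hρ, mul_pos (mul_pos hρ hρ) hρ, mul_pos hL (mul_pos hρ hρ)]
  have := add_le_add h1 h2
  rw [Acoef]
  linarith [this]

lemma alpha_le_coeff (α : Fin K → ℝ)
    (hα : ∀ k, α k = P.ρ k * P.freq k / 2
      - (7 * P.L k / (2 * P.ρ k ^ 2) + 1 / P.ρ k) * ((P.Nb k).card : ℝ) * P.L k ^ 2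
          * ((P.Td k : ℝ) + 1) ^ 2
      - ((P.Nb k).card : ℝ) * P.L k * (P.Td k : ℝ) ^ 2 / 2)
    (hβ : ∀ k, 0 < P.ρ k - 7 * P.L k) (k : Fin K) :
    α k ≤ P.ρ k / 2 - Acoef P k := by
  have hL : 0 < P.L k := P.L_pos k
  have hρ : 0 < P.ρ k := P.ρ_pos k
  have hf1 : P.freq k ≤ 1 := P.freq_le_one k
  have hcard : (1 : ℝ) ≤ ((P.Nb k).card : ℝ) := by
    have : 0 < (P.Nb k).card := Finset.card_pos.mpr ⟨k, P.self_mem k⟩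
    exact_mod_cast this
  have hE : 0 ≤ (7 * P.L k / (2 * P.ρ k ^ 2) + 1 / P.ρ k) * P.L k ^ 2
      * ((P.Td k : ℝ) + 1) ^ 2 := by positivity
  have hE2 : 0 ≤ P.L k * (P.Td k : ℝ) ^ 2 / 2 := by positivity
  have hAc := Acoef_le P k (hβ k)
  have hρf : P.ρ k * P.freq k / 2 ≤ P.ρ k / 2 := by
    have := P.freq_pos k
    nlinarith
  have hcard1 : (7 * P.L k / (2 * P.ρ k ^ 2) + 1 / P.ρ k) * P.L k ^ 2
        * ((P.Td k : ℝ) + 1) ^ 2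
      ≤ (7 * P.L k / (2 * P.ρ k ^ 2) + 1 / P.ρ k) * ((P.Nb k).card : ℝ) * P.L k ^ 2
        * ((P.Td k : ℝ) + 1) ^ 2 := by
    have h0 : 0 ≤ (7 * P.L k / (2 * P.ρ k ^ 2) + 1 / P.ρ k) * P.L k ^ 2
        * ((P.Td k : ℝ) + 1) ^ 2 := hE
    nlinarith [hE]
  have hcard2 : P.L k * (P.Td k : ℝ) ^ 2 / 2
      ≤ ((P.Nb k).card : ℝ) * P.L k * (P.Td k : ℝ) ^ 2 / 2 := by
    nlinarith [hE2]
  rw [hα k]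
  linarith [hAc, hρf, hcard1, hcard2]

/-- the global iteration threshold -/
def mIdx : ℕ := (Finset.univ.sup P.Td) + 2

lemma Td_le_m (k : Fin K) : P.Td k + 1 ≤ mIdx P := by
  have : P.Td k ≤ Finset.univ.sup P.Td := Finset.le_sup (Finset.mem_univ k)
  rw [mIdx]; omega

lemma sum_bound (hβ : ∀ k, 0 < P.ρ k - 7 * P.L k) (N : ℕ) (hN : mIdx P ≤ N) :
    ∑ t ∈ Finset.Ico (mIdx P) N, ∑ j, ((∑ k ∈ P.Nb j, P.ρ k) / 2)
        * (P.z (t + 1) j - P.z t j) ^ 2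
      ≤ Lg P (mIdx P) - Lg P N
        + ∑ k, Acoef P k * ∑ s ∈ Finset.Ico 0 N, dsq P k s := by
  set m := mIdx P with hm
  have hm1 : 1 ≤ m := by rw [hm, mIdx]; omega
  -- sum the per-iteration descent
  have hstep : ∀ t ∈ Finset.Ico m N, ∑ j, ((∑ k ∈ P.Nb j, P.ρ k) / 2)
        * (P.z (t + 1) j - P.z t j) ^ 2
      ≤ (Lg P t - Lg P (t + 1)) + ∑ k,
        (1 / (2 * (P.ρ k - 4 * P.L k)) * (P.L k ^ 2 * (P.Td k : ℝ))
            * ∑ s ∈ Finset.Ico (t + 1 - P.Td k) (t + 1), dsq P k s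
          + (3 * P.L k + P.ρ k) * ((P.L k / P.ρ k) ^ 2 * ((P.Td k : ℝ) + 1))
            * ∑ s ∈ Finset.Ico (t + 1 - (P.Td k + 1)) (t + 1), dsq P k s) := by
    intro t ht
    have ht1 : 1 ≤ t := le_trans hm1 (Finset.mem_Ico.mp ht).1
    have := descent_win P hβ t ht1
    linarith [this]
  have hsum := Finset.sum_le_sum hstep
  have htel : ∑ t ∈ Finset.Ico m N, (Lg P t - Lg P (t + 1)) = Lg P m - Lg P N := by
    have : ∑ t ∈ Finset.Ico m N, (Lg P (t + 1) - Lg P t) = Lg P N - Lg P m := by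
      rw [Finset.sum_Ico_eq_sub _ hN, Finset.sum_range_sub, Finset.sum_range_sub]
      abel
    have h2 : ∑ t ∈ Finset.Ico m N, (Lg P t - Lg P (t + 1))
        = -∑ t ∈ Finset.Ico m N, (Lg P (t + 1) - Lg P t) := by
      rw [← Finset.sum_neg_distrib]
      apply Finset.sum_congr rfl; intro t _; ring
    rw [h2, this]; ring
  rw [Finset.sum_add_distrib, htel] at hsum
  refine hsum.trans ?_
  apply add_le_add (le_refl _)
  rw [Finset.sum_comm]
  apply Finset.sum_le_sum; intro k _
  have hL : 0 < P.L k := P.L_pos k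
  have hρ : 0 < P.ρ k := P.ρ_pos k
  have hc : 0 < P.ρ k - 4 * P.L k := by have := hβ k; linarith
  have hTm : P.Td k ≤ m := by have := Td_le_m P k; omega
  have hT1m : P.Td k + 1 ≤ m := Td_le_m P k
  have hw1 := sumwin (dsq P k) (dsq_nonneg P k) (P.Td k) m N hTm
  have hw2 := sumwin (dsq P k) (dsq_nonneg P k) (P.Td k + 1) m N hT1m
  have hsplit : ∑ t ∈ Finset.Ico m N,
      (1 / (2 * (P.ρ k - 4 * P.L k)) * (P.L k ^ 2 * (P.Td k : ℝ))
          * ∑ s ∈ Finset.Ico (t + 1 - P.Td k) (t + 1), dsq P k s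
        + (3 * P.L k + P.ρ k) * ((P.L k / P.ρ k) ^ 2 * ((P.Td k : ℝ) + 1))
          * ∑ s ∈ Finset.Ico (t + 1 - (P.Td k + 1)) (t + 1), dsq P k s)
      = 1 / (2 * (P.ρ k - 4 * P.L k)) * (P.L k ^ 2 * (P.Td k : ℝ))
          * ∑ t ∈ Finset.Ico m N, ∑ s ∈ Finset.Ico (t + 1 - P.Td k) (t + 1), dsq P k s
        + (3 * P.L k + P.ρ k) * ((P.L k / P.ρ k) ^ 2 * ((P.Td k : ℝ) + 1))
          * ∑ t ∈ Finset.Ico m N, ∑ s ∈ Finset.Ico (t + 1 - (P.Td k + 1)) (t + 1), dsq P k s := by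
    rw [Finset.sum_add_distrib, Finset.mul_sum, Finset.mul_sum]
  rw [hsplit, Acoef]
  have hb1 : 1 / (2 * (P.ρ k - 4 * P.L k)) * (P.L k ^ 2 * (P.Td k : ℝ))
        * ∑ t ∈ Finset.Ico m N, ∑ s ∈ Finset.Ico (t + 1 - P.Td k) (t + 1), dsq P k s
      ≤ 1 / (2 * (P.ρ k - 4 * P.L k)) * (P.L k ^ 2 * (P.Td k : ℝ))
        * ((P.Td k : ℝ) * ∑ s ∈ Finset.Ico 0 N, dsq P k s) :=
    mul_le_mul_of_nonneg_left hw1 (by positivity)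
  have hb2 : (3 * P.L k + P.ρ k) * ((P.L k / P.ρ k) ^ 2 * ((P.Td k : ℝ) + 1))
        * ∑ t ∈ Finset.Ico m N, ∑ s ∈ Finset.Ico (t + 1 - (P.Td k + 1)) (t + 1), dsq P k s
      ≤ (3 * P.L k + P.ρ k) * ((P.L k / P.ρ k) ^ 2 * ((P.Td k : ℝ) + 1))
        * (((P.Td k : ℝ) + 1) * ∑ s ∈ Finset.Ico 0 N, dsq P k s) := by
    refine mul_le_mul_of_nonneg_left ?_ (by positivity)
    refine hw2.trans (le_of_eq ?_)
    push_cast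
    ring
  have hexp : (1 / (2 * (P.ρ k - 4 * P.L k)) * (P.L k ^ 2 * (P.Td k : ℝ)) * (P.Td k : ℝ)
      + (3 * P.L k + P.ρ k) * ((P.L k / P.ρ k) ^ 2 * ((P.Td k : ℝ) + 1)) * ((P.Td k : ℝ) + 1))
      * ∑ s ∈ Finset.Ico 0 N, dsq P k s
      = 1 / (2 * (P.ρ k - 4 * P.L k)) * (P.L k ^ 2 * (P.Td k : ℝ))
          * ((P.Td k : ℝ) * ∑ s ∈ Finset.Ico 0 N, dsq P k s)
        + (3 * P.L k + P.ρ k) * ((P.L k / P.ρ k) ^ 2 * ((P.Td k : ℝ) + 1))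
          * (((P.Td k : ℝ) + 1) * ∑ s ∈ Finset.Ico 0 N, dsq P k s) := by ring
  rw [hexp]
  exact add_le_add hb1 hb2

end AP
end

noncomputable section
namespace AP
variable {K : ℕ} (P : ProxADMM K)

lemma delta_sq_summable_bound (α : Fin K → ℝ)
    (hα : ∀ k, α k = P.ρ k * P.freq k / 2
      - (7 * P.L k / (2 * P.ρ k ^ 2) + 1 / P.ρ k) * ((P.Nb k).card : ℝ) * P.L k ^ 2
          * ((P.Td k : ℝ) + 1) ^ 2
      - ((P.Nb k).card : ℝ) * P.L k * (P.Td k : ℝ) ^ 2 / 2)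
    (hβ : ∀ k, 0 < P.ρ k - 7 * P.L k) (hA3 : ∀ k, 0 < α k) :
    ∃ C : ℝ, ∀ (j : Fin K) (N : ℕ),
      α j * ∑ t ∈ Finset.Ico (mIdx P) N, (P.z (t + 1) j - P.z t j) ^ 2 ≤ C := by
  obtain ⟨B, hB⟩ := lagLB P hβ
  set m := mIdx P with hm
  have hm1 : 1 ≤ m := by rw [hm, mIdx]; omega
  have hBm : ∀ n, 1 ≤ n → B ≤ Lg P n := by
    intro n hn
    have := hB (n - 1)
    rwa [show n - 1 + 1 = n by omega] at this
  set C0 : ℝ := ∑ k, Acoef P k * ∑ s ∈ Finset.Ico 0 m, dsq P k s with hC0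
  have hC0nn : 0 ≤ C0 := by
    apply Finset.sum_nonneg; intro k _
    have hL : 0 < P.L k := P.L_pos k
    have hρ : 0 < P.ρ k := P.ρ_pos k
    have hc : 0 < P.ρ k - 4 * P.L k := by have := hβ k; linarith
    apply mul_nonneg
    · rw [Acoef]; positivity
    · exact Finset.sum_nonneg fun s _ => dsq_nonneg P k s
  refine ⟨Lg P m - B + C0, ?_⟩
  intro j N
  by_cases hN : m ≤ N
  case neg =>
    rw [Finset.Ico_eq_empty (by omega), Finset.sum_empty, mul_zero]
    have := hBm m hm1
    linarith [hC0nn, this]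
  -- main case
  have h1 := sum_bound P hβ N hN
  have hsplitI : ∑ k, Acoef P k * ∑ s ∈ Finset.Ico 0 N, dsq P k s
      = C0 + ∑ k, Acoef P k * ∑ s ∈ Finset.Ico m N, dsq P k s := by
    rw [hC0, ← Finset.sum_add_distrib]
    apply Finset.sum_congr rfl; intro k _
    rw [← mul_add, Finset.sum_Ico_consecutive _ (Nat.zero_le m) hN]
  have h2 : ∑ k, Acoef P k * ∑ s ∈ Finset.Ico m N, dsq P k s
      = ∑ t ∈ Finset.Ico m N, ∑ j', (∑ k ∈ P.Nb j', Acoef P k)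
          * (P.z (t + 1) j' - P.z t j') ^ 2 := by
    have e1 : ∀ k : Fin K, Acoef P k * ∑ s ∈ Finset.Ico m N, dsq P k s
        = ∑ s ∈ Finset.Ico m N, Acoef P k * dsq P k s := fun k => Finset.mul_sum _ _ _
    simp only [e1]
    rw [Finset.sum_comm]
    apply Finset.sum_congr rfl; intro t _
    have e2 : ∀ k : Fin K, Acoef P k * dsq P k t
        = ∑ j' ∈ P.Nb k, Acoef P k * (P.z (t + 1) j' - P.z t j') ^ 2 := by
      intro k; rw [dsq_eq, Finset.mul_sum]
    simp only [e2]
    rw [swap_sum]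
    apply Finset.sum_congr rfl; intro j' _
    rw [Finset.sum_mul]
  -- coefficient lower bound
  have hco : ∀ j' : Fin K, α j' ≤ (∑ k ∈ P.Nb j', P.ρ k) / 2 - ∑ k ∈ P.Nb j', Acoef P k := by
    intro j'
    have e3 : (∑ k ∈ P.Nb j', P.ρ k) / 2 - ∑ k ∈ P.Nb j', Acoef P k
        = ∑ k ∈ P.Nb j', (P.ρ k / 2 - Acoef P k) := by
      rw [Finset.sum_sub_distrib, Finset.sum_div]
    rw [e3]
    calc α j' ≤ ∑ k ∈ P.Nb j', α k :=
          Finset.single_le_sum (fun k _ => (hA3 k).le) (P.self_mem j')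
      _ ≤ ∑ k ∈ P.Nb j', (P.ρ k / 2 - Acoef P k) :=
          Finset.sum_le_sum fun k _ => alpha_le_coeff P α hα hβ k
  -- put it together
  have key : ∑ t ∈ Finset.Ico m N, ∑ j', ((∑ k ∈ P.Nb j', P.ρ k) / 2
          - ∑ k ∈ P.Nb j', Acoef P k) * (P.z (t + 1) j' - P.z t j') ^ 2
      ≤ Lg P m - Lg P N + C0 := by
    have e4 : ∑ t ∈ Finset.Ico m N, ∑ j', ((∑ k ∈ P.Nb j', P.ρ k) / 2
          - ∑ k ∈ P.Nb j', Acoef P k) * (P.z (t + 1) j' - P.z t j') ^ 2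
        = (∑ t ∈ Finset.Ico m N, ∑ j', ((∑ k ∈ P.Nb j', P.ρ k) / 2)
            * (P.z (t + 1) j' - P.z t j') ^ 2)
          - ∑ t ∈ Finset.Ico m N, ∑ j', (∑ k ∈ P.Nb j', Acoef P k)
            * (P.z (t + 1) j' - P.z t j') ^ 2 := by
      rw [← Finset.sum_sub_distrib]
      apply Finset.sum_congr rfl; intro t _
      rw [← Finset.sum_sub_distrib]
      apply Finset.sum_congr rfl; intro j' _
      ring
    rw [e4, ← h2]
    rw [hsplitI] at h1
    linarith [h1]
  have hdrop : α j * ∑ t ∈ Finset.Ico m N, (P.z (t + 1) j - P.z t j) ^ 2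
      ≤ ∑ t ∈ Finset.Ico m N, ∑ j', ((∑ k ∈ P.Nb j', P.ρ k) / 2
        - ∑ k ∈ P.Nb j', Acoef P k) * (P.z (t + 1) j' - P.z t j') ^ 2 := by
    rw [Finset.mul_sum]
    apply Finset.sum_le_sum; intro t _
    calc α j * (P.z (t + 1) j - P.z t j) ^ 2
        ≤ ((∑ k ∈ P.Nb j, P.ρ k) / 2 - ∑ k ∈ P.Nb j, Acoef P k)
          * (P.z (t + 1) j - P.z t j) ^ 2 :=
          mul_le_mul_of_nonneg_right (hco j) (sq_nonneg _)
      _ ≤ ∑ j', ((∑ k ∈ P.Nb j', P.ρ k) / 2 - ∑ k ∈ P.Nb j', Acoef P k)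
          * (P.z (t + 1) j' - P.z t j') ^ 2 := by
          apply Finset.single_le_sum (f := fun j' => ((∑ k ∈ P.Nb j', P.ρ k) / 2
            - ∑ k ∈ P.Nb j', Acoef P k) * (P.z (t + 1) j' - P.z t j') ^ 2)
            (fun j' _ => ?_) (Finset.mem_univ j)
          have := (hA3 j').le.trans (hco j')
          exact mul_nonneg this (sq_nonneg _)
  have hLgN := hBm N (le_trans hm1 hN)
  linarith [key, hdrop, hLgN]

lemma delta_sq_tendsto (α : Fin K → ℝ)
    (hα : ∀ k, α k = P.ρ k * P.freq k / 2
      - (7 * P.L k / (2 * P.ρ k ^ 2) + 1 / P.ρ k) * ((P.Nb k).card : ℝ) * P.L k ^ 2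
          * ((P.Td k : ℝ) + 1) ^ 2
      - ((P.Nb k).card : ℝ) * P.L k * (P.Td k : ℝ) ^ 2 / 2)
    (hβ : ∀ k, 0 < P.ρ k - 7 * P.L k) (hA3 : ∀ k, 0 < α k) (j : Fin K) :
    Filter.Tendsto (fun t => (P.z (t + 1) j - P.z t j) ^ 2) Filter.atTop (nhds 0) := by
  obtain ⟨C, hC⟩ := delta_sq_summable_bound P α hα hβ hA3
  set m := mIdx P with hm
  have hαj : 0 < α j := hA3 j
  have hbdd : ∀ n : ℕ, ∑ i ∈ Finset.range n, (P.z (m + i + 1) j - P.z (m + i) j) ^ 2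
      ≤ C / α j := by
    intro n
    have h1 := hC j (m + n)
    have h2 : ∑ t ∈ Finset.Ico m (m + n), (P.z (t + 1) j - P.z t j) ^ 2
        = ∑ i ∈ Finset.range n, (P.z (m + i + 1) j - P.z (m + i) j) ^ 2 := by
      rw [Finset.sum_Ico_eq_sum_range]
      simp
    rw [h2] at h1
    rw [le_div_iff₀ hαj]
    linarith [h1]
  have hsummable : Summable (fun i => (P.z (m + i + 1) j - P.z (m + i) j) ^ 2) :=
    summable_of_sum_range_le (fun i => sq_nonneg _) hbdd
  have htends := hsummable.tendsto_atTop_zero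
  have heq : (fun i => (P.z (m + i + 1) j - P.z (m + i) j) ^ 2)
      = (fun t => (P.z (t + 1) j - P.z t j) ^ 2) ∘ (fun i => i + m) := by
    funext i
    simp [Function.comp, Nat.add_comm m i]
  rw [heq] at htends
  exact (Filter.tendsto_add_atTop_iff_nat m).mp htends

end AP
end

noncomputable section
namespace AP
open Filter Topology
variable {K : ℕ} (P : ProxADMM K)

lemma coord_le_norm (v : EuclideanSpace ℝ (Fin K)) (j : Fin K) : |v j| ≤ ‖v‖ := by
  have h1 : |v j| ^ 2 ≤ ‖v‖ ^ 2 := by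
    rw [norm_sq_eq, sq_abs]
    exact Finset.single_le_sum (fun i _ => sq_nonneg (v i)) (Finset.mem_univ j)
  nlinarith [abs_nonneg (v j), norm_nonneg v]

lemma norm_diff_le {E : Type*} [NormedAddCommGroup E] (F : ℕ → E) {a b l u : ℕ}
    (hla : l ≤ a) (hlb : l ≤ b) (hau : a ≤ u) (hbu : b ≤ u) :
    ‖F a - F b‖ ≤ ∑ s ∈ Finset.Ico l u, ‖F (s + 1) - F s‖ := by
  have key : ∀ b' a' : ℕ, l ≤ b' → b' ≤ a' → a' ≤ u →
      ‖F a' - F b'‖ ≤ ∑ s ∈ Finset.Ico l u, ‖F (s + 1) - F s‖ := by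
    intro b' a' hlb' hba hau'
    have htel : F a' - F b' = ∑ s ∈ Finset.Ico b' a', (F (s + 1) - F s) := by
      rw [Finset.sum_Ico_eq_sub _ hba, Finset.sum_range_sub, Finset.sum_range_sub]
      abel
    calc ‖F a' - F b'‖ ≤ ∑ s ∈ Finset.Ico b' a', ‖F (s + 1) - F s‖ := by
          rw [htel]; exact norm_sum_le _ _
      _ ≤ ∑ s ∈ Finset.Ico l u, ‖F (s + 1) - F s‖ :=
          Finset.sum_le_sum_of_subset_of_nonneg (Finset.Ico_subset_Ico hlb' hau')
            (fun s _ _ => norm_nonneg _)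
  rcases le_total b a with hba | hab
  · exact key b a hlb hba hau
  · rw [norm_sub_rev]; exact key a b hla hab hbu

section Convergence

variable (α : Fin K → ℝ)
variable (hα : ∀ k, α k = P.ρ k * P.freq k / 2
      - (7 * P.L k / (2 * P.ρ k ^ 2) + 1 / P.ρ k) * ((P.Nb k).card : ℝ) * P.L k ^ 2
          * ((P.Td k : ℝ) + 1) ^ 2
      - ((P.Nb k).card : ℝ) * P.L k * (P.Td k : ℝ) ^ 2 / 2)
variable (hβ : ∀ k, 0 < P.ρ k - 7 * P.L k) (hA3 : ∀ k, 0 < α k)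

include hα hβ hA3

lemma delta_norm_tendsto (k : Fin K) :
    Tendsto (fun t => ‖P.z (t + 1) k - P.z t k‖) atTop (𝓝 0) := by
  have h := (delta_sq_tendsto P α hα hβ hA3 k).sqrt
  rw [Real.sqrt_zero] at h
  convert h using 2 with t
  rw [Real.norm_eq_abs, Real.sqrt_sq_eq_abs]

lemma dsq_tendsto (k : Fin K) : Tendsto (fun s => dsq P k s) atTop (𝓝 0) := by
  have h : ∀ s, dsq P k s = ∑ j ∈ P.Nb k, (P.z (s + 1) j - P.z s j) ^ 2 := dsq_eq P k
  simp only [h]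
  have := tendsto_finset_sum (P.Nb k)
    (fun j _ => delta_sq_tendsto P α hα hβ hA3 j)
  simpa using this

lemma znorm_tendsto (k : Fin K) :
    Tendsto (fun s => ‖Zv P k (s + 1) - Zv P k s‖) atTop (𝓝 0) := by
  have h := (dsq_tendsto P α hα hβ hA3 k).sqrt
  rw [Real.sqrt_zero] at h
  convert h using 2 with s
  rw [dsq, Real.sqrt_sq (norm_nonneg _)]

lemma tendsto_Zdiff (k : Fin K) (c : ℕ) (a b : ℕ → ℕ)
    (ha1 : ∀ t, a t ≤ t + 2) (ha2 : ∀ t, t ≤ a t + c)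
    (hb1 : ∀ t, b t ≤ t + 2) (hb2 : ∀ t, t ≤ b t + c) :
    Tendsto (fun t => ‖Zv P k (a t) - Zv P k (b t)‖) atTop (𝓝 0) := by
  set δ : ℕ → ℝ := fun s => ‖Zv P k (s + 1) - Zv P k s‖ with hδdef
  have hδ0 : Tendsto δ atTop (𝓝 0) := znorm_tendsto P α hα hβ hA3 k
  apply squeeze_zero' (g := fun t => ∑ u ∈ Finset.range (c + 2), δ (t + 1 - u))
  · exact Eventually.of_forall fun t => norm_nonneg _
  · rw [eventually_atTop]
    refine ⟨c + 1, fun t ht => ?_⟩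
    have hat := ha2 t
    have hbt := hb2 t
    have h1 : ‖Zv P k (a t) - Zv P k (b t)‖
        ≤ ∑ s ∈ Finset.Ico (t + 2 - (c + 2)) (t + 2), δ s := by
      apply norm_diff_le (Zv P k) (by omega) (by omega) (ha1 t) (hb1 t)
    have h2 : ∑ s ∈ Finset.Ico (t + 1 + 1 - (c + 2)) (t + 1 + 1), δ s
        = ∑ u ∈ Finset.range (c + 2), δ (t + 1 - u) :=
      window_eq δ (by omega)
    rw [show t + 2 - (c + 2) = t + 1 + 1 - (c + 2) by omega,
      show t + 2 = t + 1 + 1 by omega] at h1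
    rw [h2] at h1
    exact h1
  · have : Tendsto (fun t : ℕ => (0 : ℝ)) atTop (𝓝 0) := tendsto_const_nhds
    have hsum := tendsto_finset_sum (Finset.range (c + 2))
      (fun u (_ : u ∈ Finset.range (c + 2)) =>
        hδ0.comp ((tendsto_sub_atTop_nat u).comp (tendsto_add_atTop_nat 1)))
    simpa using hsum

lemma Gdiff_tendsto (k : Fin K) :
    Tendsto (fun t => ‖Gv P k (P.τ (t + 1) k) - Gv P k (P.τ t k)‖) atTop (𝓝 0) := by
  have hL : 0 < P.L k := P.L_pos k
  have hZ := tendsto_Zdiff P α hα hβ hA3 k (P.Td k)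
    (fun t => P.τ (t + 1) k) (fun t => P.τ t k)
    (fun t => by show P.τ (t + 1) k ≤ t + 2; have := P.τ_le (t + 1) k; omega)
    (fun t => by show t ≤ P.τ (t + 1) k + P.Td k; have := P.τ_ge (t + 1) k; omega)
    (fun t => by show P.τ t k ≤ t + 2; have := P.τ_le t k; omega)
    (fun t => by show t ≤ P.τ t k + P.Td k; have := P.τ_ge t k; omega)
  apply squeeze_zero (fun t => norm_nonneg _)
    (fun t => grad_lip_z P k (P.τ (t + 1) k) (P.τ t k))
  have := hZ.const_mul (P.L k)
  simpa using this

lemma resid_tendsto (k : Fin K) (j : Fin K) (hj : j ∈ P.Nb k) :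
    Tendsto (fun t => ‖P.x t k j - P.z t j‖) atTop (𝓝 0) := by
  have hρ : 0 < P.ρ k := P.ρ_pos k
  rw [← Filter.tendsto_add_atTop_iff_nat 2]
  apply squeeze_zero (g := fun t => 1 / P.ρ k * ‖Gv P k (P.τ (t + 1) k) - Gv P k (P.τ t k)‖)
    (fun t => norm_nonneg _)
  · intro t
    rw [Real.norm_eq_abs, r_coord P t k j hj]
    rw [abs_mul, abs_neg, abs_of_pos (by positivity : (0:ℝ) < 1 / P.ρ k)]
    apply mul_le_mul_of_nonneg_left _ (by positivity)
    have := coord_le_norm (Gv P k (P.τ (t + 1) k) - Gv P k (P.τ t k)) j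
    simpa [PiLp.sub_apply] using this
  · have := (Gdiff_tendsto P α hα hβ hA3 k).const_mul (1 / P.ρ k)
    simpa using this

lemma ydiff_tendsto (k : Fin K) (j : Fin K) (hj : j ∈ P.Nb k) :
    Tendsto (fun t => ‖P.y (t + 1) k j - P.y t k j‖) atTop (𝓝 0) := by
  rw [← Filter.tendsto_add_atTop_iff_nat 1]
  apply squeeze_zero (g := fun t => ‖Gv P k (P.τ (t + 1) k) - Gv P k (P.τ t k)‖)
    (fun t => norm_nonneg _)
  · intro t
    have h1 : P.y (t + 1 + 1) k j = -(Gv P k (P.τ (t + 1) k)) j := y_formula P (t + 1) k j hj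
    have h2 : P.y (t + 1) k j = -(Gv P k (P.τ t k)) j := y_formula P t k j hj
    rw [Real.norm_eq_abs, h1, h2]
    have := coord_le_norm (Gv P k (P.τ (t + 1) k) - Gv P k (P.τ t k)) j
    rw [PiLp.sub_apply] at this
    calc |-(Gv P k (P.τ (t + 1) k)) j - -(Gv P k (P.τ t k)) j|
        = |Gv P k (P.τ (t + 1) k) j - Gv P k (P.τ t k) j| := by
          rw [abs_sub_comm]; congr 1; ring
      _ ≤ ‖Gv P k (P.τ (t + 1) k) - Gv P k (P.τ t k)‖ := this
  · exact Gdiff_tendsto P α hα hβ hA3 k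

lemma xdiff_tendsto (k : Fin K) (j : Fin K) (hj : j ∈ P.Nb k) :
    Tendsto (fun t => ‖P.x (t + 1) k j - P.x t k j‖) atTop (𝓝 0) := by
  have hres := resid_tendsto P α hα hβ hA3 k j hj
  have hz := delta_norm_tendsto P α hα hβ hA3 j
  rw [← Filter.tendsto_add_atTop_iff_nat 2]
  apply squeeze_zero (g := fun t => ‖P.z (t + 2 + 1) j - P.z (t + 2) j‖
      + ‖P.x (t + 3) k j - P.z (t + 3) j‖ + ‖P.x (t + 2) k j - P.z (t + 2) j‖)
    (fun t => norm_nonneg _)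
  · intro t
    have hid : P.x (t + 2 + 1) k j - P.x (t + 2) k j
        = (P.z (t + 2 + 1) j - P.z (t + 2) j)
          + (P.x (t + 3) k j - P.z (t + 3) j)
          - (P.x (t + 2) k j - P.z (t + 2) j) := by
      rw [show t + 2 + 1 = t + 3 from rfl]
      ring
    rw [Real.norm_eq_abs, hid]
    simp only [Real.norm_eq_abs]
    calc |(P.z (t + 2 + 1) j - P.z (t + 2) j) + (P.x (t + 3) k j - P.z (t + 3) j)
          - (P.x (t + 2) k j - P.z (t + 2) j)|
        ≤ |(P.z (t + 2 + 1) j - P.z (t + 2) j) + (P.x (t + 3) k j - P.z (t + 3) j)|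
          + |P.x (t + 2) k j - P.z (t + 2) j| := abs_sub _ _
      _ ≤ |P.z (t + 2 + 1) j - P.z (t + 2) j| + |P.x (t + 3) k j - P.z (t + 3) j|
          + |P.x (t + 2) k j - P.z (t + 2) j| := by
          have := abs_add_le (P.z (t + 2 + 1) j - P.z (t + 2) j)
            (P.x (t + 3) k j - P.z (t + 3) j)
          linarith
  · have h1 := hz.comp (tendsto_add_atTop_nat 2)
    have h2 := hres.comp (tendsto_add_atTop_nat 3)
    have h3 := hres.comp (tendsto_add_atTop_nat 2)
    have := (h1.add h2).add h3
    simp only [Function.comp, Real.norm_eq_abs] at this ⊢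
    simpa using this

end Convergence
end AP
end

/-- **Theorem 1(a)** (asynchronous proximal ADMM, assumptions (A1)-(A3)):
successive differences of all iterates vanish, and asymptotic consensus
`x_{kj}^t - z_j^t → 0` holds. -/
theorem prox_admm_iterates_converge {K : ℕ} (P : ProxADMM K)
    (α β : Fin K → ℝ)
    (hα : ∀ k, α k = P.ρ k * P.freq k / 2
      - (7 * P.L k / (2 * P.ρ k ^ 2) + 1 / P.ρ k) * ((P.Nb k).card : ℝ) * P.L k ^ 2
          * ((P.Td k : ℝ) + 1) ^ 2
      - ((P.Nb k).card : ℝ) * P.L k * (P.Td k : ℝ) ^ 2 / 2)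
    (hβ : ∀ k, β k = P.ρ k - 7 * P.L k)
    (hA3 : ∀ k, 0 < α k ∧ 0 < β k) :
    (∀ k : Fin K, Tendsto (fun t => ‖P.z (t + 1) k - P.z t k‖) atTop (𝓝 0)) ∧
    (∀ k : Fin K, ∀ j ∈ P.Nb k,
      Tendsto (fun t => ‖P.x (t + 1) k j - P.x t k j‖) atTop (𝓝 0)) ∧
    (∀ k : Fin K, ∀ j ∈ P.Nb k,
      Tendsto (fun t => ‖P.y (t + 1) k j - P.y t k j‖) atTop (𝓝 0)) ∧
    (∀ k : Fin K, ∀ j ∈ P.Nb k,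
      Tendsto (fun t => ‖P.x t k j - P.z t j‖) atTop (𝓝 0)) := by
  have hβ' : ∀ k, 0 < P.ρ k - 7 * P.L k := fun k => by
    have h := (hA3 k).2
    rwa [hβ k] at h
  have hA3' : ∀ k, 0 < α k := fun k => (hA3 k).1
  exact ⟨fun k => AP.delta_norm_tendsto P α hα hβ' hA3' k,
    fun k j hj => AP.xdiff_tendsto P α hα hβ' hA3' k j hj,
    fun k j hj => AP.ydiff_tendsto P α hα hβ' hA3' k j hj,
    fun k j hj => AP.resid_tendsto P α hα hβ' hA3' k j hj⟩
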